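/- Suppose λ* < λ, where λ* is the optimal bottleneck length of a full Steiner tree of P with respect to S, and the optimal tree's skeleton T* is a subtree of MST(S). Then there exists a connected component T_j of the forest obtained from MST(S) by removing edges of length at least λ, such that for every p ∈ P there is a vertex s of T_j with (p,s) an edge of the Yao-type graph Υ₆(P,S) and |p s| ≤ λ*. -/
import Mathlib


/-- The point of the Euclidean plane with coordinates `(x, y)`. -/
noncomputable def pt (x y : ℝ) : EuclideanSpace ℝ (Fin 2) :=
  (WithLp.equiv 2 (Fin 2 → ℝ)).symm ![x, y]

/-- The unit direction of the `k`-th of six cones. -/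
noncomputable def dir (k : Fin 6) : EuclideanSpace ℝ (Fin 2) :=
  pt (Real.cos (k * Real.pi / 3)) (Real.sin (k * Real.pi / 3))

/-- Membership of `q` in the `k`-th cone of angular width `π/3` with apex `p`. -/
def inCone (p : EuclideanSpace ℝ (Fin 2)) (k : Fin 6)
    (q : EuclideanSpace ℝ (Fin 2)) : Prop :=
  InnerProductGeometry.angle (q - p) (dir k) ≤ Real.pi / 6

/-- Euclidean edge weight for graphs on the points of `S`. -/
noncomputable def euclWeight {S : Finset (EuclideanSpace ℝ (Fin 2))} :
    Sym2 ↥S → ℝ :=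
  Sym2.lift ⟨fun a b => dist (a : EuclideanSpace ℝ (Fin 2)) (b : EuclideanSpace ℝ (Fin 2)),
    fun _ _ => dist_comm _ _⟩

/-- Total Euclidean edge length of a graph on the points of `S`. -/
noncomputable def totalWeight {S : Finset (EuclideanSpace ℝ (Fin 2))}
    (G : SimpleGraph ↥S) : ℝ :=
  ∑ e ∈ (Set.toFinite G.edgeSet).toFinset, euclWeight e
open RealInnerProductSpace

lemma inner_two (v w : EuclideanSpace ℝ (Fin 2)) : ⟪v, w⟫ = v 0 * w 0 + v 1 * w 1 := by
  simp [PiLp.inner_apply, RCLike.inner_apply, Fin.sum_univ_two, mul_comm]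

lemma norm_sq_two (v : EuclideanSpace ℝ (Fin 2)) : ‖v‖^2 = v 0 ^2 + v 1 ^2 := by
  rw [EuclideanSpace.norm_eq, Real.sq_sqrt (by positivity)]
  simp [Fin.sum_univ_two, sq_abs]

lemma dir0 (k : Fin 6) : dir k 0 = Real.cos (k * Real.pi / 3) := rfl
lemma dir1 (k : Fin 6) : dir k 1 = Real.sin (k * Real.pi / 3) := rfl

lemma norm_dir (k : Fin 6) : ‖dir k‖ = 1 := by
  have h : ‖dir k‖^2 = 1 := by
    rw [norm_sq_two, dir0, dir1]
    rw [add_comm]; exact Real.sin_sq_add_cos_sq _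
  nlinarith [norm_nonneg (dir k)]

-- explicit coordinates of all six directions
lemma dir_vals : (dir 0 0 = 1 ∧ dir 0 1 = 0) ∧ (dir 1 0 = 1/2 ∧ dir 1 1 = Real.sqrt 3/2)
    ∧ (dir 2 0 = -(1/2) ∧ dir 2 1 = Real.sqrt 3/2) ∧ (dir 3 0 = -1 ∧ dir 3 1 = 0)
    ∧ (dir 4 0 = -(1/2) ∧ dir 4 1 = -(Real.sqrt 3/2))
    ∧ (dir 5 0 = 1/2 ∧ dir 5 1 = -(Real.sqrt 3/2)) := by
  have e0 : ((0 : Fin 6) : ℝ) * Real.pi / 3 = 0 := by norm_num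
  have e1 : ((1 : Fin 6) : ℝ) * Real.pi / 3 = Real.pi / 3 := by simp only [show ((1:Fin 6):ℕ) = 1 from rfl]; push_cast; ring
  have e2 : ((2 : Fin 6) : ℝ) * Real.pi / 3 = Real.pi - Real.pi / 3 := by
    simp only [show ((2:Fin 6):ℕ) = 2 from rfl]; push_cast; ring
  have e3 : ((3 : Fin 6) : ℝ) * Real.pi / 3 = Real.pi := by simp only [show ((3:Fin 6):ℕ) = 3 from rfl]; push_cast; ring
  have e4 : ((4 : Fin 6) : ℝ) * Real.pi / 3 = Real.pi / 3 + Real.pi := by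
    simp only [show ((4:Fin 6):ℕ) = 4 from rfl]; push_cast; ring
  have e5 : ((5 : Fin 6) : ℝ) * Real.pi / 3 = Real.pi - Real.pi / 3 + Real.pi := by
    simp only [show ((5:Fin 6):ℕ) = 5 from rfl]; push_cast; ring
  refine ⟨⟨?_,?_⟩,⟨?_,?_⟩,⟨?_,?_⟩,⟨?_,?_⟩,⟨?_,?_⟩,⟨?_,?_⟩⟩ <;>
    simp only [dir0, dir1, e0, e1, e2, e3, e4, e5, Real.cos_pi_sub, Real.sin_pi_sub,
      Real.cos_add_pi, Real.sin_add_pi, Real.cos_pi_div_three, Real.sin_pi_div_three,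
      Real.cos_pi, Real.sin_pi, Real.cos_zero, Real.sin_zero] <;> norm_num

/-- If the inner product with a unit vector is at least `√3/2 ‖v‖` then the angle is `≤ π/6`. -/
lemma angle_le_of_inner (v d : EuclideanSpace ℝ (Fin 2)) (hd : ‖d‖ = 1) (hv : v ≠ 0)
    (h : Real.sqrt 3 / 2 * ‖v‖ ≤ ⟪v, d⟫) :
    InnerProductGeometry.angle v d ≤ Real.pi / 6 := by
  have hv' : 0 < ‖v‖ := norm_pos_iff.mpr hv
  have hcos : Real.cos (InnerProductGeometry.angle v d) = ⟪v, d⟫ / ‖v‖ := by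
    rw [InnerProductGeometry.cos_angle, hd, mul_one]
  by_contra hgt
  push_neg at hgt
  have h1 : Real.cos (InnerProductGeometry.angle v d) < Real.cos (Real.pi / 6) := by
    apply Real.cos_lt_cos_of_nonneg_of_le_pi (by positivity) (InnerProductGeometry.angle_le_pi _ _) hgt
  rw [Real.cos_pi_div_six, hcos] at h1
  rw [div_lt_iff₀ hv'] at h1
  linarith
/-- Conversely. -/
lemma inner_of_angle_le (v d : EuclideanSpace ℝ (Fin 2)) (hd : ‖d‖ = 1)
    (h : InnerProductGeometry.angle v d ≤ Real.pi / 6) :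
    Real.sqrt 3 / 2 * ‖v‖ ≤ ⟪v, d⟫ := by
  have hcos : Real.cos (InnerProductGeometry.angle v d) * ‖v‖ = ⟪v, d⟫ := by
    have := InnerProductGeometry.cos_angle_mul_norm_mul_norm v d
    rwa [hd, mul_one] at this
  have h1 : Real.cos (Real.pi / 6) ≤ Real.cos (InnerProductGeometry.angle v d) :=
    Real.cos_le_cos_of_nonneg_of_le_pi (InnerProductGeometry.angle_nonneg _ _)
      (by linarith [Real.pi_pos]) h
  rw [Real.cos_pi_div_six] at h1
  nlinarith [norm_nonneg v]

lemma le_of_sq_le_sq' (a b : ℝ) (h : a^2 ≤ b^2) (hb : 0 ≤ b) : a ≤ b := by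
  nlinarith [sq_nonneg (a-b), sq_nonneg (a+b)]

lemma exists_cone_core (x y n : ℝ) (hn : n^2 = x^2 + y^2) (hn' : 0 ≤ n) :
    (Real.sqrt 3/2*n ≤ x*1 + y*0) ∨ (Real.sqrt 3/2*n ≤ x*(1/2) + y*(Real.sqrt 3/2)) ∨
    (Real.sqrt 3/2*n ≤ x*(-(1/2)) + y*(Real.sqrt 3/2)) ∨ (Real.sqrt 3/2*n ≤ x*(-1) + y*0) ∨
    (Real.sqrt 3/2*n ≤ x*(-(1/2)) + y*(-(Real.sqrt 3/2))) ∨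
    (Real.sqrt 3/2*n ≤ x*(1/2) + y*(-(Real.sqrt 3/2))) := by
  have hs3 : Real.sqrt 3 ^ 2 = 3 := Real.sq_sqrt (by norm_num)
  have hs3' : (0:ℝ) ≤ Real.sqrt 3 := Real.sqrt_nonneg 3
  rcases le_total 0 x with hx0 | hx0 <;> rcases le_total 0 y with hy0 | hy0
  · rcases le_total (Real.sqrt 3 * y) x with h | h
    · refine Or.inl ?_
      refine le_of_sq_le_sq' _ _ ?_ (by nlinarith)
      nlinarith [mul_le_mul h h (mul_nonneg hs3' hy0) hx0]
    · refine Or.inr (Or.inl ?_)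
      refine le_of_sq_le_sq' _ _ ?_ (by nlinarith [mul_nonneg hs3' hy0])
      nlinarith [mul_nonneg hx0 (sub_nonneg.mpr h)]
  · rcases le_total (-(Real.sqrt 3) * y) x with h | h
    · refine Or.inl ?_
      refine le_of_sq_le_sq' _ _ ?_ (by nlinarith)
      nlinarith [mul_le_mul h h (by nlinarith [mul_nonneg hs3' (neg_nonneg.mpr hy0)]) hx0]
    · refine Or.inr (Or.inr (Or.inr (Or.inr (Or.inr ?_))))
      refine le_of_sq_le_sq' _ _ ?_ (by nlinarith [mul_nonneg hs3' (neg_nonneg.mpr hy0)])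
      nlinarith [mul_nonneg hx0 (sub_nonneg.mpr h)]
  · rcases le_total (Real.sqrt 3 * y) (-x) with h | h
    · refine Or.inr (Or.inr (Or.inr (Or.inl ?_)))
      refine le_of_sq_le_sq' _ _ ?_ (by nlinarith)
      nlinarith [mul_le_mul h h (mul_nonneg hs3' hy0) (by linarith)]
    · refine Or.inr (Or.inr (Or.inl ?_))
      refine le_of_sq_le_sq' _ _ ?_ (by nlinarith [mul_nonneg hs3' hy0])
      nlinarith [mul_nonneg (neg_nonneg.mpr hx0) (sub_nonneg.mpr h)]
  · rcases le_total (-(Real.sqrt 3) * y) (-x) with h | h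
    · refine Or.inr (Or.inr (Or.inr (Or.inl ?_)))
      refine le_of_sq_le_sq' _ _ ?_ (by nlinarith)
      nlinarith [mul_le_mul h h (by nlinarith [mul_nonneg hs3' (neg_nonneg.mpr hy0)]) (by linarith)]
    · refine Or.inr (Or.inr (Or.inr (Or.inr (Or.inl ?_))))
      refine le_of_sq_le_sq' _ _ ?_ (by nlinarith [mul_nonneg hs3' (neg_nonneg.mpr hy0)])
      nlinarith [mul_nonneg (neg_nonneg.mpr hx0) (sub_nonneg.mpr h)]

lemma exists_cone (p q : EuclideanSpace ℝ (Fin 2)) (hpq : q ≠ p) : ∃ k : Fin 6, inCone p k q := by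
  have hvne : q - p ≠ 0 := sub_ne_zero.mpr hpq
  obtain ⟨⟨d00, d01⟩, ⟨d10, d11⟩, ⟨d20, d21⟩, ⟨d30, d31⟩, ⟨d40, d41⟩, ⟨d50, d51⟩⟩ := dir_vals
  have hcore := exists_cone_core ((q-p) 0) ((q-p) 1) ‖q-p‖ (norm_sq_two _) (norm_nonneg _)
  have key : ∃ k : Fin 6, Real.sqrt 3 / 2 * ‖q-p‖ ≤ ⟪q-p, dir k⟫ := by
    rcases hcore with h|h|h|h|h|h
    · exact ⟨0, by rw [inner_two, d00, d01]; exact h⟩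
    · exact ⟨1, by rw [inner_two, d10, d11]; exact h⟩
    · exact ⟨2, by rw [inner_two, d20, d21]; exact h⟩
    · exact ⟨3, by rw [inner_two, d30, d31]; exact h⟩
    · exact ⟨4, by rw [inner_two, d40, d41]; exact h⟩
    · exact ⟨5, by rw [inner_two, d50, d51]; exact h⟩
  obtain ⟨k, hk⟩ := key
  exact ⟨k, angle_le_of_inner _ _ (norm_dir k) hvne hk⟩

/-- Purely real key computation. -/
lemma key_real (u0 u1 w0 w1 d0 d1 a b : ℝ) (hd : d0^2+d1^2 = 1) (ha : 0 ≤ a) (hb : 0 ≤ b)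
    (hau : a^2 = u0^2+u1^2) (hbw : b^2 = w0^2+w1^2) (hab : a ≤ b)
    (h1 : Real.sqrt 3/2*a ≤ u0*d0+u1*d1) (h2 : Real.sqrt 3/2*b ≤ w0*d0+w1*d1) :
    (u0-w0)^2+(u1-w1)^2 ≤ b^2 := by
  have hs3 : Real.sqrt 3 ^ 2 = 3 := Real.sq_sqrt (by norm_num)
  have hs3' : (0:ℝ) ≤ Real.sqrt 3 := Real.sqrt_nonneg 3
  have hsa : (0:ℝ) ≤ Real.sqrt 3/2*a := mul_nonneg (by positivity) ha
  have hsb : (0:ℝ) ≤ Real.sqrt 3/2*b := mul_nonneg (by positivity) hb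
  set pu := u0*d0+u1*d1 with hpu
  set cu := u0*d1-u1*d0 with hcu
  set pw := w0*d0+w1*d1 with hpw
  set cw := w0*d1-w1*d0 with hcw
  clear_value pu cu pw cw
  have hiu : pu^2 + cu^2 = a^2 := by
    rw [hpu, hcu]; linear_combination (u0^2+u1^2)*hd - hau
  have hiw : pw^2 + cw^2 = b^2 := by
    rw [hpw, hcw]; linear_combination (w0^2+w1^2)*hd - hbw
  have hpu2 : 3/4*a^2 ≤ pu^2 := by nlinarith [mul_le_mul h1 h1 hsa (le_trans hsa h1)]
  have hpw2 : 3/4*b^2 ≤ pw^2 := by nlinarith [mul_le_mul h2 h2 hsb (le_trans hsb h2)]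
  have hcu2 : cu^2 ≤ a^2/4 := by linarith
  have hcw2 : cw^2 ≤ b^2/4 := by linarith
  have h5 : 3/4*(a*b) ≤ pu*pw := by
    have hm := mul_le_mul h1 h2 hsb (le_trans hsa h1)
    have he : Real.sqrt 3/2*a*(Real.sqrt 3/2*b) = 3/4*(a*b) := by
      linear_combination (a*b/4)*hs3
    linarith [he ▸ hm]
  have h6 : -(a*b/4) ≤ cu*cw := by
    have hsq : (-(cu*cw))^2 ≤ (a*b/4)^2 := by
      have hm := mul_le_mul hcu2 hcw2 (sq_nonneg cw) (by positivity : (0:ℝ) ≤ a^2/4)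
      calc (-(cu*cw))^2 = cu^2 * cw^2 := by ring
        _ ≤ a^2/4*(b^2/4) := hm
        _ = (a*b/4)^2 := by ring
    have := le_of_sq_le_sq' _ _ hsq (by positivity)
    linarith
  have hid : (u0-w0)^2+(u1-w1)^2 = a^2 + b^2 - 2*(pu*pw + cu*cw) := by
    rw [hpu, hcu, hpw, hcw]
    linear_combination 2*(u0*w0+u1*w1)*hd - hau - hbw
  have hfin : a^2 ≤ a*b := by
    calc a^2 = a*a := by ring
      _ ≤ a*b := mul_le_mul_of_nonneg_left hab ha
  rw [hid]; linarith

/-- Two points in the same cone, the nearer is within the farther's distance. -/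
lemma dist_le_of_same_cone (p q1 q2 : EuclideanSpace ℝ (Fin 2)) (k : Fin 6)
    (h1 : inCone p k q1) (h2 : inCone p k q2) (hq1 : q1 ≠ p) (hq2 : q2 ≠ p)
    (hle : dist p q1 ≤ dist p q2) : dist q1 q2 ≤ dist p q2 := by
  have hi1 := inner_of_angle_le _ _ (norm_dir k) h1
  have hi2 := inner_of_angle_le _ _ (norm_dir k) h2
  rw [inner_two] at hi1 hi2
  have hd1 : dist p q1 = ‖q1 - p‖ := by rw [dist_comm, dist_eq_norm]
  have hd2 : dist p q2 = ‖q2 - p‖ := by rw [dist_comm, dist_eq_norm]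
  have hd12 : dist q1 q2 = ‖(q1-p) - (q2-p)‖ := by rw [dist_eq_norm, sub_sub_sub_cancel_right]
  rw [hd12, hd2]; rw [hd1, hd2] at hle
  have hdn : dir k 0 ^ 2 + dir k 1 ^ 2 = 1 := by
    have h := norm_sq_two (dir k); rw [norm_dir k] at h; nlinarith
  refine le_of_sq_le_sq' _ _ ?_ (norm_nonneg _)
  rw [norm_sq_two ((q1-p) - (q2-p))]
  have e0 : ((q1-p) - (q2-p)) 0 = (q1-p) 0 - (q2-p) 0 := rfl
  have e1 : ((q1-p) - (q2-p)) 1 = (q1-p) 1 - (q2-p) 1 := rfl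
  rw [e0, e1]
  exact key_real _ _ _ _ _ _ _ _ hdn (norm_nonneg _) (norm_nonneg _)
    (norm_sq_two _) (norm_sq_two _) hle hi1 hi2

section GraphAux

open SimpleGraph

variable {V : Type*}

lemma reach_of_walk_except {G G' : SimpleGraph V} {a b : V}
    (hab : G'.Reachable a b) (h : ∀ x y : V, G.Adj x y → s(x,y) ≠ s(a,b) → G'.Adj x y) :
    ∀ {x y : V}, G.Walk x y → G'.Reachable x y := by
  intro x y w
  induction w with
  | nil => exact Reachable.refl _
  | @cons u v z hadj w' ih =>
    by_cases he : s(u, v) = s(a, b)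
    · rw [Sym2.eq_iff] at he
      rcases he with ⟨rfl, rfl⟩ | ⟨rfl, rfl⟩
      · exact hab.trans ih
      · exact hab.symm.trans ih
    · exact ((h _ _ hadj he).reachable).trans ih

lemma path_side {G : SimpleGraph V} {a b : V} :
    ∀ {x y : V} (w : G.Walk x y), w.IsPath → s(a,b) ∈ w.edges →
      ((G.deleteEdges {s(a,b)}).Reachable x a ∧ (G.deleteEdges {s(a,b)}).Reachable b y) ∨
      ((G.deleteEdges {s(a,b)}).Reachable x b ∧ (G.deleteEdges {s(a,b)}).Reachable a y) := by
  intro x y w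
  induction w with
  | nil => intro _ he; simp at he
  | @cons u v z hadj w' ih =>
    intro hp he
    rw [SimpleGraph.Walk.edges_cons, List.mem_cons] at he
    have hnd := hp.edges_nodup
    rw [SimpleGraph.Walk.edges_cons] at hnd
    rcases he with he | he
    · have hnot : s(a,b) ∉ w'.edges := fun hmem =>
        (List.nodup_cons.mp hnd).1 (he ▸ hmem)
      have hw' : (G.deleteEdges {s(a,b)}).Reachable v z := by
        refine ⟨w'.transfer _ (fun e hme => ?_)⟩
        rw [SimpleGraph.edgeSet_deleteEdges]
        exact ⟨w'.edges_subset_edgeSet hme,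
          by simp only [Set.mem_singleton_iff]; exact fun hc => hnot (hc ▸ hme)⟩
      rw [Sym2.eq_iff] at he
      rcases he with ⟨rfl, rfl⟩ | ⟨rfl, rfl⟩
      · exact Or.inl ⟨Reachable.refl _, hw'⟩
      · exact Or.inr ⟨Reachable.refl _, hw'⟩
    · have hne : s(u,v) ≠ s(a,b) := fun hc =>
        (List.nodup_cons.mp hnd).1 (by rw [hc]; exact he)
      have hDadj : (G.deleteEdges {s(a,b)}).Adj u v := by
        rw [SimpleGraph.deleteEdges_adj]
        exact ⟨hadj, by simpa using hne⟩
      rcases ih hp.of_cons he with ⟨h1, h2⟩ | ⟨h1, h2⟩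
      · exact Or.inl ⟨hDadj.reachable.trans h1, h2⟩
      · exact Or.inr ⟨hDadj.reachable.trans h1, h2⟩

end GraphAux

open SimpleGraph

/-- Suppose `λ* < λ`, where `λ*` is the optimal bottleneck length of a full
Steiner tree of `P` with respect to `S`, witnessed by an optimal tree whose skeleton is a
connected subgraph of `MST(S)` with all its edges of length `≤ λ*` and whose external edges
have length `≤ λ*`. Then some connected component `C` of the forest obtained from `MST(S)`
by removing the edges of length at least `λ` satisfies: for every `p ∈ P` there is a vertex
`s` of `C` with `(p,s)` an edge of the Yao-type graph `Υ₆(P,S)` and `dist p s ≤ λ*`. -/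
theorem component_with_yao_edges
    (P S : Finset (EuclideanSpace ℝ (Fin 2))) (hP : P.Nonempty) (hS : S.Nonempty)
    (hdisj : Disjoint P S)
    (MST : SimpleGraph ↥S) (hMST : MST.IsTree)
    (hmin : ∀ T' : SimpleGraph ↥S, T'.IsTree → totalWeight MST ≤ totalWeight T')
    (E : EuclideanSpace ℝ (Fin 2) → EuclideanSpace ℝ (Fin 2) → Prop)
    (hYao : ∀ p ∈ P, ∀ k : Fin 6, (∃ s ∈ S, inCone p k s) →
      ∃ s' ∈ S, inCone p k s' ∧ E p s' ∧ ∀ t ∈ S, inCone p k t → dist p s' ≤ dist p t)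
    (lamStar lam : ℝ) (hlt : lamStar < lam)
    (hopt : ∃ H : MST.Subgraph, H.Connected ∧
      (∀ e ∈ H.edgeSet, euclWeight e ≤ lamStar) ∧
      ∀ p ∈ P, ∃ sp : ↥S, sp ∈ H.verts ∧ dist p (sp : EuclideanSpace ℝ (Fin 2)) ≤ lamStar) :
    ∃ C : (MST.deleteEdges {e | lam ≤ euclWeight e}).ConnectedComponent,
      ∀ p ∈ P, ∃ sv : ↥S,
        (MST.deleteEdges {e | lam ≤ euclWeight e}).connectedComponentMk sv = C ∧
        E p (sv : EuclideanSpace ℝ (Fin 2)) ∧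
        dist p (sv : EuclideanSpace ℝ (Fin 2)) ≤ lamStar := by
  classical
  obtain ⟨H, Hconn, Hw, Hcov⟩ := hopt
  set G := MST.deleteEdges {e | lam ≤ euclWeight e} with hGdef
  have hwmk : ∀ a b : ↥S, euclWeight s(a,b) =
      dist (a : EuclideanSpace ℝ (Fin 2)) (b : EuclideanSpace ℝ (Fin 2)) := fun a b => rfl
  have hSne : Nonempty ↥S := ⟨⟨hS.choose, hS.choose_spec⟩⟩
  -- The key exchange lemma: close vertices are connected in the truncated forest.
  have hexch : ∀ s1 s2 : ↥S,
      dist (s1 : EuclideanSpace ℝ (Fin 2)) (s2 : EuclideanSpace ℝ (Fin 2)) < lam →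
      G.Reachable s1 s2 := by
    intro s1 s2 hdlt
    by_cases hss : s1 = s2
    · exact hss ▸ Reachable.refl _
    by_cases hadj : MST.Adj s1 s2
    · refine Adj.reachable ?_
      rw [hGdef, SimpleGraph.deleteEdges_adj]
      exact ⟨hadj, by simp only [Set.mem_setOf_eq, hwmk]; exact not_le.mpr hdlt⟩
    obtain ⟨p0, hp0, hp0u⟩ := hMST.existsUnique_path s1 s2
    by_cases hall : ∀ e ∈ p0.edges, ¬ lam ≤ euclWeight e
    · exact ⟨p0.transfer G (fun e he => by
        rw [hGdef, SimpleGraph.edgeSet_deleteEdges]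
        exact ⟨p0.edges_subset_edgeSet he, hall e he⟩)⟩
    push_neg at hall
    obtain ⟨e', he'mem, he'w⟩ := hall
    exfalso
    revert he'mem he'w
    induction e' using Sym2.ind with
    | _ a b =>
    intro he'mem he'w
    have habMST : MST.Adj a b := (MST.mem_edgeSet).mp (p0.edges_subset_edgeSet he'mem)
    set f : Sym2 ↥S := s(s1, s2) with hfdef
    have hfw : euclWeight f = dist (s1 : EuclideanSpace ℝ (Fin 2)) s2 := rfl
    have hfMST : f ∉ MST.edgeSet := fun hc => hadj ((MST.mem_edgeSet).mp hc)
    have hfe' : f ≠ s(a,b) := fun hc => by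
      rw [← hc] at he'w; rw [hfw] at he'w; linarith
    set M2 := MST ⊔ fromEdgeSet {f} with hM2def
    set T' := M2.deleteEdges {s(a,b)} with hT'def
    -- a cycle in M2 through s(a,b)
    have hp0M2 : ∀ e ∈ p0.edges, e ∈ M2.edgeSet := fun e he => by
      rw [hM2def, edgeSet_sup]; exact Or.inl (p0.edges_subset_edgeSet he)
    have hM2adj : M2.Adj s2 s1 := by
      rw [hM2def, sup_adj, fromEdgeSet_adj]
      exact Or.inr ⟨by rw [Sym2.eq_swap]; exact Set.mem_singleton _, fun hc => hss hc.symm⟩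
    have hfnotp0' : s(s2, s1) ∉ (p0.transfer M2 hp0M2).edges := by
      rw [SimpleGraph.Walk.edges_transfer]
      intro hc
      exact hadj ((MST.mem_edgeSet).mp (by
        rw [← Sym2.eq_swap]; exact p0.edges_subset_edgeSet hc))
    have hcyc : (SimpleGraph.Walk.cons hM2adj (p0.transfer M2 hp0M2)).IsCycle :=
      SimpleGraph.Path.cons_isCycle ⟨p0.transfer M2 hp0M2, hp0.transfer hp0M2⟩ hM2adj hfnotp0'
    have hain : s(a,b) ∈ (SimpleGraph.Walk.cons hM2adj (p0.transfer M2 hp0M2)).edges := by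
      rw [SimpleGraph.Walk.edges_cons, SimpleGraph.Walk.edges_transfer]
      exact List.mem_cons_of_mem _ he'mem
    have hreach_ab : T'.Reachable a b :=
      (adj_and_reachable_delete_edges_iff_exists_cycle.mpr ⟨s2, _, hcyc, hain⟩).2
    -- T' is connected
    have hTconn : T'.Connected := by
      rw [connected_iff]
      refine ⟨fun x y => ?_, hSne⟩
      obtain ⟨w⟩ := hMST.isConnected.preconnected x y
      exact reach_of_walk_except hreach_ab
        (fun x' y' hxy hne => by
          rw [hT'def, SimpleGraph.deleteEdges_adj]
          exact ⟨hxy, by simpa using hne⟩)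
        (w.mapLe (le_sup_left.trans_eq hM2def.symm))
    -- T' is acyclic
    have hTacyc : T'.IsAcyclic := by
      intro u c hc
      by_cases hfc : f ∈ c.edges
      · have h2 := (adj_and_reachable_delete_edges_iff_exists_cycle.mpr ⟨u, c, hc, hfc⟩).2
        have hle : T' \ fromEdgeSet {f} ≤ MST.deleteEdges {s(a,b)} := by
          intro x y hxy
          rw [sdiff_adj] at hxy
          obtain ⟨hT, hnf⟩ := hxy
          rw [hT'def, SimpleGraph.deleteEdges_adj, hM2def, sup_adj] at hT
          obtain ⟨hM2a, hne⟩ := hT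
          rcases hM2a with hMSTa | hfa
          · rw [SimpleGraph.deleteEdges_adj]; exact ⟨hMSTa, hne⟩
          · exact absurd hfa hnf
        have hreach := h2.mono hle
        obtain ⟨wD⟩ := hreach
        have hqe : ∀ e ∈ (wD.toPath : (MST.deleteEdges {s(a,b)}).Walk s1 s2).edges,
            e ∈ MST.edgeSet := fun e he => by
          have := SimpleGraph.Walk.edges_subset_edgeSet _ he
          rw [SimpleGraph.edgeSet_deleteEdges] at this
          exact this.1
        have hq'path : ((wD.toPath : (MST.deleteEdges {s(a,b)}).Walk s1 s2).transfer
            MST hqe).IsPath := (wD.toPath.2).transfer hqe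
        have heq := hp0u _ hq'path
        have : s(a,b) ∈ ((wD.toPath : (MST.deleteEdges {s(a,b)}).Walk s1 s2).transfer
            MST hqe).edges := by rw [heq]; exact he'mem
        rw [SimpleGraph.Walk.edges_transfer] at this
        have := SimpleGraph.Walk.edges_subset_edgeSet _ this
        rw [SimpleGraph.edgeSet_deleteEdges] at this
        exact this.2 rfl
      · have hce : ∀ e ∈ c.edges, e ∈ MST.edgeSet := fun e he => by
          have h1 := SimpleGraph.Walk.edges_subset_edgeSet _ he
          rw [hT'def, SimpleGraph.edgeSet_deleteEdges, hM2def, edgeSet_sup,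
            edgeSet_fromEdgeSet] at h1
          rcases h1.1 with h2 | h2
          · exact h2
          · exact absurd (h2.1 ▸ he : f ∈ c.edges) hfc
        exact ((isTree_iff MST).mp hMST).2 (c.transfer MST hce) (hc.transfer hce)
    have hTtree : T'.IsTree := ⟨hTconn, hTacyc⟩
    -- weight comparison
    have hfdiag : ¬ f.IsDiag := by rw [hfdef, Sym2.mk_isDiag_iff]; exact hss
    have hTe : T'.edgeSet = (MST.edgeSet \ {s(a,b)}) ∪ {f} := by
      rw [hT'def, SimpleGraph.edgeSet_deleteEdges, hM2def, edgeSet_sup, edgeSet_fromEdgeSet]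
      ext e
      simp only [Set.mem_union, Set.mem_diff, Set.mem_singleton_iff, Set.mem_setOf_eq]
      constructor
      · rintro ⟨h1 | ⟨h1, _⟩, h3⟩
        · exact Or.inl ⟨h1, h3⟩
        · exact Or.inr h1
      · rintro (⟨h1, h2⟩ | rfl)
        · exact ⟨Or.inl h1, h2⟩
        · exact ⟨Or.inr ⟨rfl, hfdiag⟩, hfe'⟩
    have hB : (Set.toFinite T'.edgeSet).toFinset =
        insert f (((Set.toFinite MST.edgeSet).toFinset).erase s(a,b)) := by
      ext e
      simp only [Set.Finite.mem_toFinset, hTe, Set.mem_union, Set.mem_diff,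
        Set.mem_singleton_iff, Finset.mem_insert, Finset.mem_erase, Set.Finite.mem_toFinset]
      tauto
    have he'A : s(a,b) ∈ (Set.toFinite MST.edgeSet).toFinset := by
      rw [Set.Finite.mem_toFinset]; exact (MST.mem_edgeSet).mpr habMST
    have hfA : f ∉ ((Set.toFinite MST.edgeSet).toFinset).erase s(a,b) := by
      rw [Finset.mem_erase, Set.Finite.mem_toFinset]
      exact fun hc => hfMST hc.2
    have hsum1 : totalWeight T' = euclWeight f +
        ∑ e ∈ ((Set.toFinite MST.edgeSet).toFinset).erase s(a,b), euclWeight e := by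
      rw [totalWeight, hB, Finset.sum_insert hfA]
    have hsum2 : (∑ e ∈ ((Set.toFinite MST.edgeSet).toFinset).erase s(a,b), euclWeight e)
        + euclWeight s(a,b) = totalWeight MST := Finset.sum_erase_add _ _ he'A
    have hle := hmin T' hTtree
    rw [hsum1] at hle
    rw [hfw] at hle
    have : totalWeight MST = (∑ e ∈ ((Set.toFinite MST.edgeSet).toFinset).erase s(a,b),
        euclWeight e) + euclWeight s(a,b) := hsum2.symm
    rw [this] at hle
    linarith
  -- assemble the answer
  obtain ⟨v0, hv0⟩ := Hconn.nonempty
  refine ⟨G.connectedComponentMk v0, ?_⟩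
  intro p hp
  have hpS : p ∉ S := fun h => Finset.disjoint_left.mp hdisj hp h
  obtain ⟨sp, hspv, hspd⟩ := Hcov p hp
  have hspne : (sp : EuclideanSpace ℝ (Fin 2)) ≠ p := fun h => hpS (h ▸ sp.2)
  obtain ⟨k, hk⟩ := exists_cone p sp hspne
  obtain ⟨s', hs'S, hs'cone, hs'E, hs'min⟩ := hYao p hp k ⟨sp, sp.2, hk⟩
  have hd1 : dist p s' ≤ dist p sp := hs'min sp sp.2 hk
  have hs'ne : s' ≠ p := fun h => hpS (h ▸ hs'S)
  have hclose : dist s' (sp : EuclideanSpace ℝ (Fin 2)) ≤ dist p sp :=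
    dist_le_of_same_cone p s' sp k hs'cone hk hs'ne hspne hd1
  have hreach1 : G.Reachable ⟨s', hs'S⟩ sp :=
    hexch ⟨s', hs'S⟩ sp (lt_of_le_of_lt (hclose.trans hspd) hlt)
  let φ : H.coe →g G := ⟨fun x => x.1, fun {x y} hxy => by
    rw [Subgraph.coe_adj] at hxy
    rw [hGdef, SimpleGraph.deleteEdges_adj]
    refine ⟨H.adj_sub hxy, ?_⟩
    simp only [Set.mem_setOf_eq, hwmk, not_le]
    have := Hw s(x.1, y.1) (Subgraph.mem_edgeSet.mpr hxy)
    rw [hwmk] at this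
    exact lt_of_le_of_lt this hlt⟩
  have hreach2 : G.Reachable sp v0 := Reachable.map φ (Hconn.preconnected ⟨sp, hspv⟩ ⟨v0, hv0⟩)
  exact ⟨⟨s', hs'S⟩, ConnectedComponent.sound (hreach1.trans hreach2), hs'E, hd1.trans hspd⟩
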